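/- Under the elementary-system hypotheses, if moreover C_v is a constant function on D, α is nowhere zero on D, and T > 0, C_v > 0, k > 0 on D, then at any point of D the scalar curvature R of the Hessian metric of U is negative if and only if −k/C_v < ∂k/∂S < 0 at that point (equivalently, −1/C_v < ∂(ln k)/∂S < 0). -/

import Mathlib

/-- Partial derivative `∂f/∂x¹` (first coordinate) of a function on `ℝ²`. -/
noncomputable def pS (f : ℝ × ℝ → ℝ) (x : ℝ × ℝ) : ℝ := fderiv ℝ f x (1, 0)

/-- Partial derivative `∂f/∂x²` (second coordinate) of a function on `ℝ²`. -/
noncomputable def pV (f : ℝ × ℝ → ℝ) (x : ℝ × ℝ) : ℝ := fderiv ℝ f x (0, 1)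

/-- Hessian metric entry `η₁₁ = ∂²E/∂x¹∂x¹`. -/
noncomputable def e11 (E : ℝ × ℝ → ℝ) : ℝ × ℝ → ℝ := pS (pS E)

/-- Hessian metric entry `η₁₂ = ∂²E/∂x¹∂x²`. -/
noncomputable def e12 (E : ℝ × ℝ → ℝ) : ℝ × ℝ → ℝ := pV (pS E)

/-- Hessian metric entry `η₂₂ = ∂²E/∂x²∂x²`. -/
noncomputable def e22 (E : ℝ × ℝ → ℝ) : ℝ × ℝ → ℝ := pV (pV E)

/-- Determinant `det η = η₁₁η₂₂ − η₁₂²` of the Hessian metric of `E`. -/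
noncomputable def detHess (E : ℝ × ℝ → ℝ) (x : ℝ × ℝ) : ℝ :=
  e11 E x * e22 E x - (e12 E x) ^ 2

/-- Determinant of the 3×3 matrix `M` with rows `(η₁₁, ∂₁η₁₁, ∂₂η₁₁)`,
`(η₁₂, ∂₁η₁₂, ∂₂η₁₂)`, `(η₂₂, ∂₁η₂₂, ∂₂η₂₂)`. -/
noncomputable def detM (E : ℝ × ℝ → ℝ) (x : ℝ × ℝ) : ℝ :=
  Matrix.det !![e11 E x, pS (e11 E) x, pV (e11 E) x;
                e12 E x, pS (e12 E) x, pV (e12 E) x;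
                e22 E x, pS (e22 E) x, pV (e22 E) x]

/-- Scalar curvature `R = −(1/(4(det η)²))·det M` of the Hessian metric of `E`. -/
noncomputable def scalarCurv (E : ℝ × ℝ → ℝ) (x : ℝ × ℝ) : ℝ :=
  -(1 / (4 * (detHess E x) ^ 2)) * detM E x


open Filter Real

private lemma top_add_one_le : ((⊤:ℕ∞) : WithTop ℕ∞) + 1 ≤ ((⊤:ℕ∞) : WithTop ℕ∞) := by
  simp


private lemma contDiffAt_pS {f : ℝ×ℝ→ℝ} {x} (hf : ContDiffAt ℝ (⊤:ℕ∞) f x) :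
    ContDiffAt ℝ (⊤:ℕ∞) (pS f) x :=
  (hf.fderiv_right top_add_one_le).clm_apply contDiffAt_const

private lemma contDiffAt_pV {f : ℝ×ℝ→ℝ} {x} (hf : ContDiffAt ℝ (⊤:ℕ∞) f x) :
    ContDiffAt ℝ (⊤:ℕ∞) (pV f) x :=
  (hf.fderiv_right top_add_one_le).clm_apply contDiffAt_const

private lemma diffAt_div {f g : ℝ × ℝ → ℝ} {x : ℝ × ℝ} (hf : DifferentiableAt ℝ f x)
    (hg : DifferentiableAt ℝ g x) (h0 : g x ≠ 0) :
    DifferentiableAt ℝ (fun y => f y / g y) x := by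
  simp only [div_eq_mul_inv]
  exact hf.mul (hg.inv h0)

private lemma pS_congr {f g : ℝ×ℝ→ℝ} {x} (h : f =ᶠ[nhds x] g) : pS f x = pS g x := by
  unfold pS; rw [h.fderiv_eq]

private lemma pV_congr {f g : ℝ×ℝ→ℝ} {x} (h : f =ᶠ[nhds x] g) : pV f x = pV g x := by
  unfold pV; rw [h.fderiv_eq]

private lemma hasDerivAt_fst_line {f : ℝ×ℝ→ℝ} {x : ℝ×ℝ} (hf : DifferentiableAt ℝ f x) :
    HasDerivAt (fun s => f (s, x.2)) (pS f x) x.1 := by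
  have hL : HasDerivAt (fun s : ℝ => (s, x.2)) ((1:ℝ), (0:ℝ)) x.1 :=
    HasDerivAt.prodMk (hasDerivAt_id x.1) (hasDerivAt_const x.1 x.2)
  have h2 : HasFDerivAt f (fderiv ℝ f x) (x.1, x.2) := by
    simpa using hf.hasFDerivAt
  simpa [Function.comp_def, pS] using h2.comp_hasDerivAt x.1 hL

private lemma hasDerivAt_snd_line {f : ℝ×ℝ→ℝ} {x : ℝ×ℝ} (hf : DifferentiableAt ℝ f x) :
    HasDerivAt (fun s => f (x.1, s)) (pV f x) x.2 := by
  have hL : HasDerivAt (fun s : ℝ => (x.1, s)) ((0:ℝ), (1:ℝ)) x.2 :=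
    HasDerivAt.prodMk (hasDerivAt_const x.2 x.1) (hasDerivAt_id x.2)
  have h2 : HasFDerivAt f (fderiv ℝ f x) (x.1, x.2) := by
    simpa using hf.hasFDerivAt
  simpa [Function.comp_def, pV] using h2.comp_hasDerivAt x.2 hL

private lemma pS_eq_of_line {f : ℝ×ℝ→ℝ} {x : ℝ×ℝ} {d : ℝ} (hf : DifferentiableAt ℝ f x)
    (h : HasDerivAt (fun s => f (s, x.2)) d x.1) : pS f x = d :=
  (hasDerivAt_fst_line hf).unique h

private lemma pV_eq_of_line {f : ℝ×ℝ→ℝ} {x : ℝ×ℝ} {d : ℝ} (hf : DifferentiableAt ℝ f x)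
    (h : HasDerivAt (fun s => f (x.1, s)) d x.2) : pV f x = d :=
  (hasDerivAt_snd_line hf).unique h

private lemma schwarz {g : ℝ×ℝ→ℝ} {x} (hg : ContDiffAt ℝ (⊤:ℕ∞) g x) :
    pS (pV g) x = pV (pS g) x := by
  have hsym : IsSymmSndFDerivAt ℝ g x := hg.isSymmSndFDerivAt (by simp; norm_cast)
  have hd : DifferentiableAt ℝ (fderiv ℝ g) x :=
    (hg.fderiv_right top_add_one_le).differentiableAt (by norm_cast)
  have h1 : pS (pV g) x = fderiv ℝ (fderiv ℝ g) x (1,0) (0,1) := by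
    show fderiv ℝ (fun y => fderiv ℝ g y ((0:ℝ),(1:ℝ))) x (1,0) = _
    rw [fderiv_clm_apply hd (differentiableAt_const _)]
    simp
  have h2 : pV (pS g) x = fderiv ℝ (fderiv ℝ g) x (0,1) (1,0) := by
    show fderiv ℝ (fun y => fderiv ℝ g y ((1:ℝ),(0:ℝ))) x (0,1) = _
    rw [fderiv_clm_apply hd (differentiableAt_const _)]
    simp
  rw [h1, h2, hsym.eq]

set_option maxHeartbeats 2000000 in
/-- For an elementary thermodynamical system (hypotheses as in Identity I) with `C_v` constant
on `D`, `α` nowhere zero, and `T, C_v, k > 0` on `D`: at any point of `D` the scalar curvature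
of the Hessian metric of `U` is negative if and only if `−k/C_v < ∂k/∂S < 0` there
(equivalently, `−1/C_v < ∂(ln k)/∂S < 0`). -/
theorem scalar_curvature_negative_iff
    (D : Set (ℝ × ℝ)) (hD : IsOpen D) (hDV : ∀ x ∈ D, 0 < x.2)
    (U Cv α k : ℝ × ℝ → ℝ)
    (hU : ContDiffOn ℝ (⊤ : ℕ∞) U D)
    (hCv : ContDiffOn ℝ (⊤ : ℕ∞) Cv D)
    (hα : ContDiffOn ℝ (⊤ : ℕ∞) α D)
    (hk : ContDiffOn ℝ (⊤ : ℕ∞) k D)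
    (hT0 : ∀ x ∈ D, pS U x ≠ 0)
    (hCv0 : ∀ x ∈ D, Cv x ≠ 0)
    (hk0 : ∀ x ∈ D, k x ≠ 0)
    (h11 : ∀ x ∈ D, e11 U x = pS U x / Cv x)
    (h12 : ∀ x ∈ D, e12 U x = -(pS U x * α x) / (k x * Cv x))
    (h22 : ∀ x ∈ D,
      e22 U x = (Cv x + x.2 * pS U x * α x ^ 2 / k x) / (x.2 * k x * Cv x))
    (cv : ℝ) (hconst : ∀ x ∈ D, Cv x = cv)
    (hα0 : ∀ x ∈ D, α x ≠ 0)
    (hTpos : ∀ x ∈ D, 0 < pS U x)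
    (hCvpos : ∀ x ∈ D, 0 < Cv x)
    (hkpos : ∀ x ∈ D, 0 < k x) :
    ∀ x ∈ D,
      (scalarCurv U x < 0 ↔ (-(k x) / Cv x < pS k x ∧ pS k x < 0)) ∧
      (scalarCurv U x < 0 ↔
        (-(1 / Cv x) < pS (fun y => Real.log (k y)) x ∧
          pS (fun y => Real.log (k y)) x < 0)) := by
  intro x hx
  have hmem : D ∈ nhds x := hD.mem_nhds hx
  have hUcd : ContDiffAt ℝ (⊤:ℕ∞) U x := hU.contDiffAt hmem
  have hTd : DifferentiableAt ℝ (pS U) x :=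
    (contDiffAt_pS hUcd).differentiableAt (by norm_cast)
  have hαd : DifferentiableAt ℝ α x := (hα.contDiffAt hmem).differentiableAt (by norm_cast)
  have hkd : DifferentiableAt ℝ k x := (hk.contDiffAt hmem).differentiableAt (by norm_cast)
  have hcv : Cv x = cv := hconst x hx
  have ht : 0 < pS U x := hTpos x hx
  have hcvp : 0 < cv := hcv ▸ hCvpos x hx
  have hKp : 0 < k x := hkpos x hx
  have hvp : 0 < x.2 := hDV x hx
  have hKne : k x ≠ 0 := ne_of_gt hKp
  have hcvne : cv ≠ 0 := ne_of_gt hcvp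
  have htne : pS U x ≠ 0 := ne_of_gt ht
  have hvne : x.2 ≠ 0 := ne_of_gt hvp
  have hTS : pS (pS U) x = pS U x / cv := by have := h11 x hx; rwa [hcv] at this
  have hTV : pV (pS U) x = -(pS U x * α x) / (k x * cv) := by
    have := h12 x hx; rwa [hcv] at this
  have hv11 : e11 U x = pS U x / cv := hTS
  have hv12 : e12 U x = -(pS U x * α x) / (k x * cv) := hTV
  have hv22 : e22 U x = (cv + x.2 * pS U x * α x ^ 2 / k x) / (x.2 * k x * cv) := by
    have := h22 x hx; rwa [hcv] at this
  have E11 : e11 U =ᶠ[nhds x] fun y => pS U y / cv :=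
    eventually_of_mem hmem (fun y hy => by rw [h11 y hy, hconst y hy])
  have E12 : e12 U =ᶠ[nhds x] fun y => -(pS U y * α y) / (k y * cv) :=
    eventually_of_mem hmem (fun y hy => by rw [h12 y hy, hconst y hy])
  have E22 : e22 U =ᶠ[nhds x] fun y =>
      (cv + y.2 * pS U y * α y ^ 2 / k y) / (y.2 * k y * cv) :=
    eventually_of_mem hmem (fun y hy => by rw [h22 y hy, hconst y hy])
  -- third derivatives of the metric coefficients
  have hTdc : DifferentiableAt ℝ (fun y : ℝ × ℝ => pS U y / cv) x := diffAt_div hTd (differentiableAt_const cv) hcvne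
  have d1 : pS (e11 U) x = pS U x / cv / cv := by
    rw [pS_congr E11]
    have := pS_eq_of_line (f := fun y => pS U y / cv) (x := x) hTdc
      ((hasDerivAt_fst_line hTd).div_const cv)
    rwa [hTS] at this
  have d2 : pV (e11 U) x = -(pS U x * α x) / (k x * cv) / cv := by
    rw [pV_congr E11]
    have := pV_eq_of_line (f := fun y => pS U y / cv) (x := x) hTdc
      ((hasDerivAt_snd_line hTd).div_const cv)
    rwa [hTV] at this
  have d3 : pS (e12 U) x = pV (e11 U) x := schwarz (contDiffAt_pS hUcd)
  have hnum3 : DifferentiableAt ℝ (fun y : ℝ × ℝ => -(pS U y * α y)) x := (hTd.mul hαd).neg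
  have hden3 : DifferentiableAt ℝ (fun y : ℝ × ℝ => k y * cv) x := hkd.mul_const cv
  have hd3diff : DifferentiableAt ℝ (fun y => -(pS U y * α y) / (k y * cv)) x :=
    diffAt_div hnum3 hden3 (mul_ne_zero hKne hcvne)
  have d3' := pS_eq_of_line (f := fun y => -(pS U y * α y) / (k y * cv)) (x := x) hd3diff
      ((((hasDerivAt_fst_line hTd).mul (hasDerivAt_fst_line hαd)).neg.div
        ((hasDerivAt_fst_line hkd).mul_const cv) (mul_ne_zero hKne hcvne)))
  -- the Maxwell-type compatibility relation forced by symmetry of third derivatives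
  have haS : pS α x * k x = α x * pS k x := by
    have heq := ((pS_congr E12).symm.trans (d3.trans d2)).symm.trans d3'
    beta_reduce at heq
    simp only [Prod.mk.eta, Pi.mul_apply, Pi.neg_apply, Pi.pow_apply] at heq
    rw [hTS] at heq
    field_simp at heq
    have h2 : pS U x * k x * cv ^ 4 * (pS α x * k x) =
        pS U x * k x * cv ^ 4 * (α x * pS k x) := by
      first
      | linear_combination (pS U x * k x * cv ^ 3) * heq
      | linear_combination -heq
    exact mul_left_cancel₀ (by positivity) h2
  have haS' : pS α x = α x * pS k x / k x := by
    field_simp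
    linarith [haS]
  have hd4diff : DifferentiableAt ℝ
      (fun y : ℝ × ℝ => (cv + y.2 * pS U y * α y ^ 2 / k y) / (y.2 * k y * cv)) x :=
    by
    have hnum4 : DifferentiableAt ℝ
        (fun y : ℝ × ℝ => cv + y.2 * pS U y * α y ^ 2 / k y) x := by
      have h1 : DifferentiableAt ℝ (fun y : ℝ × ℝ => y.2 * pS U y * α y ^ 2) x :=
        (differentiableAt_snd.mul hTd).mul (hαd.pow 2)
      exact (differentiableAt_const cv).add (diffAt_div h1 hkd hKne)
    have hden4 : DifferentiableAt ℝ (fun y : ℝ × ℝ => y.2 * k y * cv) x :=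
      (differentiableAt_snd.mul hkd).mul_const cv
    exact diffAt_div hnum4 hden4 (mul_ne_zero (mul_ne_zero hvne hKne) hcvne)
  have d4' := pS_eq_of_line
      (f := fun y => (cv + y.2 * pS U y * α y ^ 2 / k y) / (y.2 * k y * cv)) (x := x)
      hd4diff
      (HasDerivAt.div
        ((((((hasDerivAt_fst_line hTd).const_mul x.2).mul
            ((hasDerivAt_fst_line hαd).pow 2)).div
          (hasDerivAt_fst_line hkd) hKne)).const_add cv)
        (((hasDerivAt_fst_line hkd).const_mul x.2).mul_const cv)
        (mul_ne_zero (mul_ne_zero hvne hKne) hcvne))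
  have d4 : pS (e22 U) x = _ := (pS_congr E22).trans d4'
  have d5 : pV (e12 U) x = pS (e22 U) x := by
    have Esym : e12 U =ᶠ[nhds x] pS (pV U) :=
      eventually_of_mem hmem (fun y hy => (schwarz (hU.contDiffAt (hD.mem_nhds hy))).symm)
    calc pV (e12 U) x = pV (pS (pV U)) x := pV_congr Esym
      _ = pS (pV (pV U)) x := (schwarz (contDiffAt_pV hUcd)).symm
      _ = pS (e22 U) x := rfl
  -- the determinant of the Hessian metric
  have hdh : detHess U x = pS U x / (cv * x.2 * k x) := by
    unfold detHess
    rw [hv11, hv12, hv22]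
    field_simp
    ring
  -- the numerator determinant
  have hdM : detM U x =
      -(pS U x * (pS k x * (cv * pS k x + k x))) / (cv ^ 2 * x.2 ^ 2 * k x ^ 4) := by
    unfold detM
    rw [Matrix.det_fin_three]
    simp [Matrix.cons_val_zero, Matrix.cons_val_one, Matrix.head_cons,
      Matrix.cons_val_two, Matrix.tail_cons]
    rw [hv11, hv12, hv22, d1, d2, d3, d2, d5, d4]
    beta_reduce
    simp only [Prod.mk.eta, Pi.mul_apply, Pi.neg_apply, Pi.pow_apply]
    rw [hTS, haS']
    generalize pV (e22 U) x = Z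
    push_cast
    field_simp
    ring
  have hsc : scalarCurv U x =
      pS k x * (cv * pS k x + k x) / (4 * pS U x * k x ^ 2) := by
    unfold scalarCurv
    rw [hdM, hdh]
    field_simp
  have hprod : scalarCurv U x < 0 ↔ pS k x * (cv * pS k x + k x) < 0 := by
    rw [hsc]
    constructor
    · intro h
      by_contra hc
      push_neg at hc
      exact absurd h (not_lt.2 (div_nonneg hc (by positivity)))
    · intro h
      exact div_neg_of_neg_of_pos h (by positivity)
  have hiff1 : pS k x * (cv * pS k x + k x) < 0 ↔ (-(k x) / cv < pS k x ∧ pS k x < 0) := by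
    constructor
    · intro h
      have hKS : pS k x < 0 := by
        by_contra h2
        push_neg at h2
        nlinarith [mul_nonneg h2 (by nlinarith : (0:ℝ) ≤ cv * pS k x + k x)]
      refine ⟨?_, hKS⟩
      rw [div_lt_iff₀ hcvp]
      nlinarith
    · rintro ⟨h1, h2⟩
      rw [div_lt_iff₀ hcvp] at h1
      nlinarith
  have hlog : pS (fun y => Real.log (k y)) x = pS k x / k x :=
    pS_eq_of_line (hkd.log hKne) ((hasDerivAt_fst_line hkd).log hKne)
  have hiff2 : (-(k x) / cv < pS k x ∧ pS k x < 0) ↔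
      (-(1 / cv) < pS k x / k x ∧ pS k x / k x < 0) := by
    have hrw : -(1 / cv) = (-1) / cv := by ring
    constructor
    · rintro ⟨h1, h2⟩
      rw [div_lt_iff₀ hcvp] at h1
      refine ⟨?_, div_neg_of_neg_of_pos h2 hKp⟩
      rw [hrw, div_lt_div_iff₀ hcvp hKp]
      nlinarith
    · rintro ⟨h1, h2⟩
      rw [hrw, div_lt_div_iff₀ hcvp hKp] at h1
      have h2' : pS k x < 0 := by
        by_contra hc
        push_neg at hc
        exact absurd h2 (not_lt.2 (div_nonneg hc hKp.le))
      exact ⟨by rw [div_lt_iff₀ hcvp]; nlinarith, h2'⟩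
  refine ⟨?_, ?_⟩
  · rw [hcv]
    exact hprod.trans hiff1
  · rw [hcv, hlog]
    exact hprod.trans (hiff1.trans hiff2)
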